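/- arXiv:2210.14693 — 4 statements merged into one kernel-verified Lean document; each statement's English description precedes it below -/
import Mathlib

section
/- For every natural number n and every real x > 0, the n-th derivative of x ↦ e^{-jx} x^n (with j a fixed nonnegative real) equals n! e^{-jx} L_n(jx), where L_n is the n-th Laguerre polynomial. -/
open Polynomial Finset

noncomputable def Eop (j : ℝ) : Module.End ℝ (Polynomial ℝ) :=
  Polynomial.derivative - j • 1

lemma Eop_apply (j : ℝ) (p : Polynomial ℝ) :
    Eop j p = derivative p - j • p := by
  simp [Eop, LinearMap.sub_apply]

lemma iteratedDeriv_exp_poly (j : ℝ) (m : ℕ) (p : Polynomial ℝ) :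
    iteratedDeriv m (fun t : ℝ => Real.exp (-j * t) * p.eval t)
      = fun t => Real.exp (-j * t) * ((Eop j ^ m) p).eval t := by
  induction m generalizing p with
  | zero => simp
  | succ m ih =>
    rw [iteratedDeriv_succ']
    have hd : deriv (fun t : ℝ => Real.exp (-j * t) * p.eval t)
        = fun t => Real.exp (-j * t) * (Eop j p).eval t := by
      funext t
      have h0 : HasDerivAt (fun y : ℝ => -j * y) (-j) t := by
        simpa using (hasDerivAt_id t).const_mul (-j)
      have h1 : HasDerivAt (fun t : ℝ => Real.exp (-j * t)) (Real.exp (-j * t) * (-j)) t :=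
        (Real.hasDerivAt_exp (-j * t)).comp t h0
      have h2 : deriv (fun t : ℝ => Real.exp (-j * t) * p.eval t) t = _ := (h1.mul (p.hasDerivAt t)).deriv
      rw [h2, Eop_apply]
      simp [eval_sub, smul_eq_mul]
      ring
    rw [hd, ih (Eop j p), pow_succ]
    funext t
    rw [Module.End.mul_apply]

lemma Eop_pow_eval (j x : ℝ) (n : ℕ) (p : Polynomial ℝ) :
    ((Eop j ^ n) p).eval x
      = ∑ k ∈ range (n + 1),
          (n.choose k : ℝ) * (-j) ^ (n - k) * (derivative^[k] p).eval x := by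
  have hc : Commute (Polynomial.derivative : Module.End ℝ (Polynomial ℝ)) (-(j • 1)) :=
    by have := ((Commute.one_right (Polynomial.derivative : Module.End ℝ (Polynomial ℝ))).smul_right j).neg_right; exact this
  have hE : Eop j = Polynomial.derivative + -(j • 1) := by
    rw [Eop, sub_eq_add_neg]
  rw [hE, hc.add_pow n, LinearMap.sum_apply, eval_finset_sum]
  refine Finset.sum_congr rfl fun k hk => ?_
  have hneg : -(j • (1 : Module.End ℝ (Polynomial ℝ))) = (-j) • 1 := by
    module
  rw [Module.End.mul_apply, Module.End.mul_apply, Module.End.natCast_apply,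
    ← Nat.cast_smul_eq_nsmul ℝ, hneg, _root_.smul_pow, one_pow, LinearMap.smul_apply,
    Module.End.one_apply, Module.End.pow_apply, iterate_derivative_smul, iterate_derivative_smul, eval_smul, eval_smul,
    smul_eq_mul, smul_eq_mul]
  ring

noncomputable def laguerre (n : ℕ) (x : ℝ) : ℝ :=
  Real.exp x / n.factorial * iteratedDeriv n (fun t : ℝ => Real.exp (-t) * t ^ n) x

theorem iteratedDeriv_exp_mul_pow (n : ℕ) (j : ℝ) (hj : 0 ≤ j) (x : ℝ) (hx : 0 < x) :
    iteratedDeriv n (fun y : ℝ => Real.exp (-j * y) * y ^ n) x =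
      n.factorial * Real.exp (-j * x) * laguerre n (j * x) := by
  have hfun1 : (fun y : ℝ => Real.exp (-j * y) * y ^ n)
      = fun y => Real.exp (-j * y) * (X ^ n : Polynomial ℝ).eval y := by
    funext y; simp
  have hfun2 : (fun t : ℝ => Real.exp (-t) * t ^ n)
      = fun t => Real.exp (-1 * t) * (X ^ n : Polynomial ℝ).eval t := by
    funext t; simp
  have hAB : ((Eop j ^ n) (X ^ n : Polynomial ℝ)).eval x
      = ((Eop 1 ^ n) (X ^ n : Polynomial ℝ)).eval (j * x) := by
    rw [Eop_pow_eval, Eop_pow_eval]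
    refine Finset.sum_congr rfl fun k hk => ?_
    rw [iterate_derivative_X_pow_eq_smul]
    simp only [eval_smul, smul_eq_mul, eval_pow, eval_X]
    rw [show (-j) ^ (n - k) = (-1 : ℝ) ^ (n - k) * j ^ (n - k) by
      rw [neg_eq_neg_one_mul, mul_pow], mul_pow]
    ring
  rw [hfun1, iteratedDeriv_exp_poly j n (X ^ n)]
  unfold laguerre
  rw [hfun2, iteratedDeriv_exp_poly 1 n (X ^ n)]
  simp only [neg_mul, one_mul]
  rw [hAB]
  have hfac : (n.factorial : ℝ) ≠ 0 := Nat.cast_ne_zero.2 n.factorial_ne_zero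
  have h2 : Real.exp (j * x) * Real.exp (-(j * x)) = 1 := by
    rw [← Real.exp_add]; simp
  field_simp
  linear_combination (-((Eop 1 ^ n) (X ^ n : Polynomial ℝ)).eval (j * x)) * h2
end

section
/- For every natural number n ≥ 1 and every x > 0, the n-th derivative of x^n/(1-e^{-x}) equals n! · Σ_{j=0}^∞ L_n(jx) e^{-jx}, where L_n is the n-th Laguerre polynomial. -/
open Polynomial

noncomputable def dstep (c : ℝ) (p : ℝ[X]) : ℝ[X] := derivative p + c • p

noncomputable def gj (n j : ℕ) : ℝ → ℝ :=
  fun y => ((X : ℝ[X])^n).eval y * Real.exp (-(j:ℝ) * y)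

lemma hasDerivAt_polyExp (c : ℝ) (p : ℝ[X]) (y : ℝ) :
    HasDerivAt (fun t => p.eval t * Real.exp (c * t))
      ((dstep c p).eval y * Real.exp (c * y)) y := by
  have h1 : HasDerivAt (fun t : ℝ => Real.exp (c * t)) (Real.exp (c * y) * c) y := by
    simpa [Function.comp_def] using (Real.hasDerivAt_exp (c * y)).comp y ((hasDerivAt_id y).const_mul c)
  have := (p.hasDerivAt y).mul h1
  refine this.congr_deriv ?_
  simp [dstep]
  ring

lemma iteratedDeriv_polyExp (c : ℝ) (k : ℕ) (p : ℝ[X]) :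
    iteratedDeriv k (fun t => p.eval t * Real.exp (c * t)) =
      fun t => ((dstep c)^[k] p).eval t * Real.exp (c * t) := by
  induction k generalizing p with
  | zero => simp
  | succ k ih =>
    rw [iteratedDeriv_succ']
    have hd : deriv (fun t => p.eval t * Real.exp (c * t)) =
        fun t => (dstep c p).eval t * Real.exp (c * t) :=
      funext fun y => (hasDerivAt_polyExp c p y).deriv
    rw [hd, ih (dstep c p), Function.iterate_succ_apply]

lemma dstep_iterate (c : ℝ) (k : ℕ) (p : ℝ[X]) :
    (dstep c)^[k] p = ∑ i ∈ Finset.range (k+1),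
      ((k.choose i : ℝ) * c^(k-i)) • derivative^[i] p := by
  set A : ℝ[X] →ₗ[ℝ] ℝ[X] := Polynomial.derivative + c • 1 with hA
  have hfun : dstep c = ⇑A := by
    funext q; simp [dstep, hA]
  have hc : Commute (Polynomial.derivative : Module.End ℝ ℝ[X]) (c • 1) :=
    (Commute.one_right _).smul_right c
  rw [hfun, ← Module.End.pow_apply, hA, hc.add_pow]
  rw [LinearMap.sum_apply]
  refine Finset.sum_congr rfl fun i hi => ?_
  simp [Module.End.mul_apply, Module.End.pow_apply, _root_.smul_pow, Module.End.natCast_apply,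
    smul_smul, map_smul]
  rw [← nsmul_eq_mul, ← Nat.cast_smul_eq_nsmul ℝ, smul_smul, mul_comm]

lemma eval_dstep_iterate_bound (n k : ℕ) (c y R : ℝ) (hR : 1 ≤ R) (hy : |y| ≤ R) :
    |((dstep c)^[k] (X^n : ℝ[X])).eval y| ≤ (1 + |c|)^k * (n.factorial * R^n) := by
  rw [dstep_iterate]
  have hterm : ∀ i ∈ Finset.range (k+1),
      |(((k.choose i : ℝ) * c^(k-i)) • derivative^[i] (X^n : ℝ[X])).eval y|
        ≤ (1:ℝ)^i * |c|^(k-i) * (k.choose i) * (n.factorial * R^n) := by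
    intro i _
    have h2 : |((n.descFactorial i : ℝ))| ≤ (n.factorial : ℝ) := by
      rw [abs_of_nonneg (by positivity)]
      have : n.descFactorial i ≤ n.factorial := by
        rcases le_or_gt i n with h | h
        · calc n.descFactorial i ≤ (n-i).factorial * n.descFactorial i :=
              Nat.le_mul_of_pos_left _ (Nat.factorial_pos _)
          _ = n.factorial := Nat.factorial_mul_descFactorial h
        · rw [Nat.descFactorial_eq_zero_iff_lt.mpr h]; exact Nat.zero_le _
      exact_mod_cast this
    have h3 : |y|^(n-i) ≤ R^n :=
      le_trans (pow_le_pow_left₀ (abs_nonneg y) hy _) (pow_le_pow_right₀ hR (Nat.sub_le n i))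
    rw [Polynomial.iterate_derivative_X_pow_eq_smul]
    simp only [Polynomial.eval_smul, smul_eq_mul, Polynomial.eval_pow, Polynomial.eval_X,
      abs_mul, abs_pow, one_pow, one_mul]
    rw [abs_of_nonneg (show (0:ℝ) ≤ (k.choose i:ℝ) by positivity),
      mul_comm ((k.choose i : ℝ)) (|c|^(k-i))]
    have h4 : |(n.descFactorial i : ℝ)| * |y|^(n-i) ≤ (n.factorial : ℝ) * R^n :=
      mul_le_mul h2 h3 (by positivity) (by positivity)
    exact mul_le_mul_of_nonneg_left h4 (by positivity)
  calc |(∑ i ∈ Finset.range (k+1),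
          ((k.choose i : ℝ) * c^(k-i)) • derivative^[i] (X^n : ℝ[X])).eval y|
      ≤ ∑ i ∈ Finset.range (k+1),
        |(((k.choose i : ℝ) * c^(k-i)) • derivative^[i] (X^n : ℝ[X])).eval y| := by
        rw [Polynomial.eval_finset_sum]
        exact Finset.abs_sum_le_sum_abs _ _
    _ ≤ ∑ i ∈ Finset.range (k+1), (1:ℝ)^i * |c|^(k-i) * (k.choose i) * (n.factorial * R^n) :=
        Finset.sum_le_sum hterm
    _ = (1 + |c|)^k * (n.factorial * R^n) := by
        rw [← Finset.sum_mul, ← add_pow]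

lemma iteratedDeriv_gj (n j k : ℕ) :
    iteratedDeriv k (gj n j) =
      fun y => ((dstep (-(j:ℝ)))^[k] ((X:ℝ[X])^n)).eval y * Real.exp (-(j:ℝ) * y) :=
  iteratedDeriv_polyExp (-(j:ℝ)) k _

lemma gj_bound (n k j : ℕ) {a R y : ℝ} (ha : 0 < a) (hR : 1 ≤ R) (hy : a ≤ y) (hyR : y ≤ R) :
    ‖iteratedDeriv k (gj n j) y‖ ≤
      ((1 + (j:ℝ))^k * Real.exp (-a)^j) * (n.factorial * R^n) := by
  rw [iteratedDeriv_gj, Real.norm_eq_abs, abs_mul]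
  have hy0 : 0 ≤ y := le_trans ha.le hy
  have h1 : |((dstep (-(j:ℝ)))^[k] ((X:ℝ[X])^n)).eval y| ≤ (1 + (j:ℝ))^k * (n.factorial * R^n) := by
    have := eval_dstep_iterate_bound n k (-(j:ℝ)) y R hR (by rwa [abs_of_nonneg hy0])
    simpa using this
  have h2 : |Real.exp (-(j:ℝ) * y)| ≤ Real.exp (-a)^j := by
    rw [abs_of_nonneg (Real.exp_nonneg _), ← Real.exp_nat_mul]
    apply Real.exp_le_exp.mpr
    have : (j:ℝ) * a ≤ (j:ℝ) * y := mul_le_mul_of_nonneg_left hy (by positivity)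
    nlinarith
  calc |((dstep (-(j:ℝ)))^[k] ((X:ℝ[X])^n)).eval y| * |Real.exp (-(j:ℝ) * y)|
      ≤ ((1 + (j:ℝ))^k * (n.factorial * R^n)) * Real.exp (-a)^j :=
        mul_le_mul h1 h2 (abs_nonneg _) (by positivity)
    _ = ((1 + (j:ℝ))^k * Real.exp (-a)^j) * (n.factorial * R^n) := by ring

lemma summable_polyexp (m : ℕ) {r : ℝ} (h0 : 0 ≤ r) (h1 : r < 1) :
    Summable (fun j : ℕ => (1 + (j:ℝ))^m * r^j) := by
  have hs : Summable (fun j : ℕ => (2:ℝ)^m * ((j:ℝ)^m * r^j + r^j)) :=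
    ((summable_pow_mul_geometric_of_norm_lt_one m
        (by rwa [Real.norm_eq_abs, abs_of_nonneg h0])).add
      (summable_geometric_of_lt_one h0 h1)).mul_left _
  refine Summable.of_nonneg_of_le (fun j => by positivity) (fun j => ?_) hs
  have hmax : (1 + (j:ℝ))^m ≤ 2^m * ((j:ℝ)^m + 1) := by
    have hb : (1 + (j:ℝ)) ≤ 2 * max 1 (j:ℝ) := by
      rcases le_total (j:ℝ) 1 with h | h
      · have := le_max_left (1:ℝ) (j:ℝ); linarith
      · have := le_max_right (1:ℝ) (j:ℝ); linarith
    have h5 : (1 + (j:ℝ))^m ≤ (2 * max 1 (j:ℝ))^m :=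
      pow_le_pow_left₀ (by positivity) hb m
    have h6 : (max 1 (j:ℝ))^m ≤ (j:ℝ)^m + 1 := by
      rcases le_total 1 (j:ℝ) with h | h
      · rw [max_eq_right h]; nlinarith [pow_nonneg (le_trans zero_le_one h) m]
      · rw [max_eq_left h, one_pow]
        nlinarith [pow_nonneg (show (0:ℝ) ≤ (j:ℝ) from Nat.cast_nonneg j) m]
    calc (1 + (j:ℝ))^m ≤ (2 * max 1 (j:ℝ))^m := h5
      _ = 2^m * (max 1 (j:ℝ))^m := by rw [mul_pow]
      _ ≤ 2^m * ((j:ℝ)^m + 1) := by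
          exact mul_le_mul_of_nonneg_left h6 (by positivity)
  calc (1 + (j:ℝ))^m * r^j ≤ (2^m * ((j:ℝ)^m + 1)) * r^j :=
        mul_le_mul_of_nonneg_right hmax (by positivity)
    _ = (2:ℝ)^m * ((j:ℝ)^m * r^j + r^j) := by ring
lemma swap_lemma (n : ℕ) : ∀ (k : ℕ) (x : ℝ), 0 < x →
    iteratedDeriv k (fun y => ∑' j : ℕ, gj n j y) x = ∑' j : ℕ, iteratedDeriv k (gj n j) x := by
  intro k
  induction k with
  | zero => intro x hx; simp
  | succ k ih =>
    intro x hx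
    have hx2 : 0 < x/2 := by linarith
    have hR : (1:ℝ) ≤ x + 1 := by linarith
    have hxt : x ∈ Set.Ioo (x/2) (x+1) := ⟨by linarith, by linarith⟩
    have hrlt : Real.exp (-(x/2)) < 1 := Real.exp_lt_one_iff.mpr (by linarith)
    have hr0 : (0:ℝ) ≤ Real.exp (-(x/2)) := Real.exp_nonneg _
    set M : ℝ := (n.factorial : ℝ) * (x+1)^n with hM
    have hu : Summable (fun j : ℕ =>
        ((1 + (j:ℝ))^(k+1) * Real.exp (-(x/2))^j) * M) :=
      (by simpa [mul_assoc] using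
        (summable_polyexp (k+1) hr0 hrlt).mul_right M : Summable _)
    have hderiv : ∀ (j : ℕ) (y : ℝ), y ∈ Set.Ioo (x/2) (x+1) →
        HasDerivAt (iteratedDeriv k (gj n j)) (iteratedDeriv (k+1) (gj n j) y) y := by
      intro j y _
      rw [iteratedDeriv_gj n j k, iteratedDeriv_gj n j (k+1), Function.iterate_succ_apply']
      exact hasDerivAt_polyExp (-(j:ℝ)) _ y
    have hbound : ∀ (j : ℕ) (y : ℝ), y ∈ Set.Ioo (x/2) (x+1) →
        ‖iteratedDeriv (k+1) (gj n j) y‖ ≤ ((1 + (j:ℝ))^(k+1) * Real.exp (-(x/2))^j) * M :=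
      fun j y hy => gj_bound n (k+1) j hx2 hR hy.1.le hy.2.le
    have hsum0 : Summable (fun j : ℕ => iteratedDeriv k (gj n j) x) := by
      apply Summable.of_norm_bounded
        ((summable_polyexp k hr0 hrlt).mul_right M)
      intro j
      exact gj_bound n k j hx2 hR hxt.1.le hxt.2.le
    have key := hasDerivAt_tsum_of_isPreconnected hu isOpen_Ioo
      (isPreconnected_Ioo) hderiv hbound hxt hsum0 hxt
    have hEE : iteratedDeriv k (fun y => ∑' j : ℕ, gj n j y) =ᶠ[nhds x]
        (fun y => ∑' j : ℕ, iteratedDeriv k (gj n j) y) := by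
      filter_upwards [Ioi_mem_nhds hx] with y hy using ih y hy
    rw [iteratedDeriv_succ, hEE.deriv_eq, key.deriv]

theorem deriv_eq_laguerre_series (n : ℕ) (hn : 1 ≤ n) (x : ℝ) (hx : 0 < x) :
    iteratedDeriv n (fun y : ℝ => y ^ n / (1 - Real.exp (-y))) x =
      n.factorial * ∑' j : ℕ, laguerre n ((j : ℝ) * x) * Real.exp (-(j : ℝ) * x) := by
  have hEqOn : Set.EqOn (fun y : ℝ => y ^ n / (1 - Real.exp (-y)))
      (fun y => ∑' j : ℕ, gj n j y) (Set.Ioi 0) := by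
    intro y hy
    have hy0 : (0:ℝ) < y := hy
    have h0 : Real.exp (-y) < 1 := Real.exp_lt_one_iff.mpr (by linarith)
    have hgeo : ∑' j : ℕ, Real.exp (-y)^j = (1 - Real.exp (-y))⁻¹ :=
      tsum_geometric_of_lt_one (Real.exp_nonneg _) h0
    simp only
    rw [div_eq_mul_inv, ← hgeo, ← tsum_mul_left]
    refine tsum_congr fun j => ?_
    simp only [gj, Polynomial.eval_pow, Polynomial.eval_X]
    rw [← Real.exp_nat_mul]
    ring_nf
  have h1 : iteratedDeriv n (fun y : ℝ => y ^ n / (1 - Real.exp (-y))) x =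
      iteratedDeriv n (fun y => ∑' j : ℕ, gj n j y) x :=
    hEqOn.iteratedDeriv_of_isOpen isOpen_Ioi n hx
  rw [h1, swap_lemma n n x hx, ← tsum_mul_left]
  refine tsum_congr fun j => ?_
  -- termwise identity
  have hfe : (fun t : ℝ => Real.exp (-t) * t ^ n) =
      (fun t : ℝ => ((X:ℝ[X])^n).eval t * Real.exp ((-1 : ℝ) * t)) := by
    funext t; simp [mul_comm]
  have hlag : laguerre n ((j:ℝ) * x) =
      Real.exp ((j:ℝ)*x) / n.factorial *
        (((dstep (-1 : ℝ))^[n] ((X:ℝ[X])^n)).eval ((j:ℝ)*x) *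
          Real.exp ((-1:ℝ) * ((j:ℝ)*x))) := by
    rw [laguerre, hfe, iteratedDeriv_polyExp]
  have hcross : ((dstep (-1 : ℝ))^[n] ((X:ℝ[X])^n)).eval ((j:ℝ)*x) =
      ((dstep (-(j:ℝ)))^[n] ((X:ℝ[X])^n)).eval x := by
    rw [dstep_iterate, dstep_iterate, Polynomial.eval_finset_sum, Polynomial.eval_finset_sum]
    refine Finset.sum_congr rfl fun i _ => ?_
    rw [Polynomial.iterate_derivative_X_pow_eq_smul]
    simp only [Polynomial.eval_smul, smul_eq_mul, Polynomial.eval_pow, Polynomial.eval_X,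
      mul_pow]
    rw [show (-(j:ℝ)) = (-1) * (j:ℝ) by ring, mul_pow]
    ring
  rw [iteratedDeriv_gj n j n, hlag, hcross]
  have hexp : Real.exp ((j:ℝ)*x) * Real.exp (-((j:ℝ) * x)) = 1 := by
    rw [← Real.exp_add]; norm_num
  have hfac : (n.factorial : ℝ) ≠ 0 := by positivity
  field_simp
  ring_nf
  linear_combination (-Polynomial.eval x ((dstep (-(j:ℝ)))^[n] ((X:ℝ[X])^n))) * hexp
end

section
/- For every natural number n, ∫_{-∞}^∞ e^{-t²} H_n(t)² dt = √π · 2^n · n!, where H_n is the n-th physicists' Hermite polynomial. -/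
open Polynomial MeasureTheory Real

noncomputable def physHermite (n : ℕ) (t : ℝ) : ℝ :=
  (-1 : ℝ) ^ n * Real.exp (t ^ 2) * iteratedDeriv n (fun s : ℝ => Real.exp (-s ^ 2)) t

/-- The sequence of physicists' Hermite polynomials as `Polynomial ℝ`. -/
noncomputable def Qh : ℕ → Polynomial ℝ
  | 0 => 1
  | n + 1 => C 2 * X * Qh n - derivative (Qh n)

lemma hasDerivAt_gauss (t : ℝ) :
    HasDerivAt (fun s : ℝ => Real.exp (-s ^ 2)) (Real.exp (-t ^ 2) * (-(2 * t))) t := by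
  have h1 : HasDerivAt (fun s : ℝ => -s ^ 2) (-(2 * t)) t := by
    simpa using (hasDerivAt_pow 2 t).fun_neg
  exact h1.exp

lemma hasDerivAt_F (n : ℕ) (t : ℝ) :
    HasDerivAt (fun s => (Qh n).eval s * Real.exp (-s ^ 2))
      (-((Qh (n + 1)).eval t * Real.exp (-t ^ 2))) t := by
  have h := ((Qh n).hasDerivAt t).fun_mul (hasDerivAt_gauss t)
  refine h.congr_deriv ?_
  simp [Qh]
  ring

lemma iteratedDeriv_gauss (n : ℕ) :
    iteratedDeriv n (fun s : ℝ => Real.exp (-s ^ 2)) =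
      fun t => (-1 : ℝ) ^ n * ((Qh n).eval t * Real.exp (-t ^ 2)) := by
  induction n with
  | zero => funext t; simp [Qh]
  | succ n ih =>
      funext t
      rw [iteratedDeriv_succ, ih]
      rw [deriv_const_mul _ (hasDerivAt_F n t).differentiableAt]
      rw [(hasDerivAt_F n t).deriv]
      ring

lemma physHermite_eq (n : ℕ) (t : ℝ) : physHermite n t = (Qh n).eval t := by
  rw [physHermite, iteratedDeriv_gauss]
  have h : Real.exp (t ^ 2) * Real.exp (-t ^ 2) = 1 := by
    rw [← Real.exp_add]; simp
  have hs : ((-1 : ℝ) ^ n) * ((-1 : ℝ) ^ n) = 1 := by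
    rw [← pow_add, ← two_mul, pow_mul]; norm_num
  calc (-1 : ℝ) ^ n * Real.exp (t ^ 2) *
        ((-1 : ℝ) ^ n * ((Qh n).eval t * Real.exp (-t ^ 2)))
      = ((-1 : ℝ) ^ n * (-1 : ℝ) ^ n) * (Real.exp (t ^ 2) * Real.exp (-t ^ 2)) *
        (Qh n).eval t := by ring
    _ = (Qh n).eval t := by rw [h, hs]; ring

lemma derivative_Qh (n : ℕ) :
    derivative (Qh (n + 1)) = C (2 * (n + 1) : ℝ) * Qh n := by
  induction n with
  | zero => simp [Qh]
  | succ n ih =>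
      have hC : (C (2 * ((n : ℝ) + 1 + 1)) : Polynomial ℝ)
          = C (2 * ((n : ℝ) + 1)) + C 2 := by
        rw [← C_add]; ring_nf
      show derivative (C 2 * X * Qh (n + 1) - derivative (Qh (n + 1))) = _
      rw [derivative_sub, derivative_mul, derivative_mul, ih, derivative_mul]
      simp only [derivative_C, derivative_X, zero_mul, mul_one, zero_add]
      push_cast
      rw [hC, show Qh (n+1) = C 2 * X * Qh n - derivative (Qh n) from rfl]
      ring

lemma integrable_poly_gaussian (P : Polynomial ℝ) :
    Integrable fun t : ℝ => P.eval t * Real.exp (-t ^ 2) := by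
  induction P using Polynomial.induction_on' with
  | add p q hp hq => simpa [add_mul, Pi.add_def] using hp.add hq
  | monomial n a =>
      have hbase : Integrable fun x : ℝ => x ^ (n : ℝ) * Real.exp (-1 * x ^ 2) :=
        integrable_rpow_mul_exp_neg_mul_sq one_pos
          (lt_of_lt_of_le neg_one_lt_zero (Nat.cast_nonneg n))
      simp_rw [Real.rpow_natCast] at hbase
      refine ((hbase.abs).const_mul |a|).mono' ?_ ?_
      · exact (Continuous.mul (by continuity) (by continuity)).aestronglyMeasurable
      · filter_upwards with x
        simp only [Polynomial.eval_monomial, Real.norm_eq_abs]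
        rw [abs_mul, abs_mul, abs_mul, neg_one_mul]
        exact le_of_eq (by ring)

theorem hermite_int_rec (n : ℕ) :
    ∫ t : ℝ, (Qh (n+1)).eval t * Real.exp (-t ^ 2) * (Qh (n+1)).eval t =
      (2 * ((n:ℝ) + 1)) * ∫ t : ℝ, (Qh n).eval t * Real.exp (-t ^ 2) * (Qh n).eval t := by
  have hu : ∀ x : ℝ, HasDerivAt (fun s => (Qh n).eval s * Real.exp (-s ^ 2))
      (-((Qh (n + 1)).eval x * Real.exp (-x ^ 2))) x := hasDerivAt_F n
  have hv : ∀ x : ℝ, HasDerivAt (fun s => (Qh (n+1)).eval s)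
      ((2 * ((n:ℝ) + 1)) * (Qh n).eval x) x := by
    intro x
    have := (Qh (n+1)).hasDerivAt x
    rwa [derivative_Qh, Polynomial.eval_mul, Polynomial.eval_C] at this
  have key := integral_mul_deriv_eq_deriv_mul_of_integrable (fun x _ => hu x) (fun x _ => hv x) ?_ ?_ ?_
  · calc ∫ t : ℝ, (Qh (n+1)).eval t * Real.exp (-t ^ 2) * (Qh (n+1)).eval t
        = -∫ x : ℝ, -((Qh (n + 1)).eval x * Real.exp (-x ^ 2)) * (Qh (n+1)).eval x := by
          rw [← integral_neg]; congr 1; funext x; ring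
      _ = ∫ x : ℝ, (Qh n).eval x * Real.exp (-x ^ 2) * ((2 * ((n:ℝ) + 1)) * (Qh n).eval x) := by
          rw [← key]
      _ = (2 * ((n:ℝ) + 1)) * ∫ t : ℝ, (Qh n).eval t * Real.exp (-t ^ 2) * (Qh n).eval t := by
          rw [← integral_const_mul]; congr 1; funext x; ring
  · apply (integrable_poly_gaussian (Qh n * C (2 * ((n:ℝ) + 1)) * Qh n)).congr
    filter_upwards with x
    simp only [Pi.mul_apply, Polynomial.eval_mul, Polynomial.eval_C]
    ring
  · apply (integrable_poly_gaussian (-(Qh (n+1) * Qh (n+1)))).congr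
    filter_upwards with x
    simp only [Pi.mul_apply, Polynomial.eval_mul, Polynomial.eval_neg]
    ring
  · apply (integrable_poly_gaussian (Qh n * Qh (n+1))).congr
    filter_upwards with x
    simp only [Pi.mul_apply, Polynomial.eval_mul]
    ring

theorem hermite_norm_sq (n : ℕ) :
    ∫ t : ℝ, Real.exp (-t ^ 2) * (physHermite n t) ^ 2 =
      Real.sqrt Real.pi * 2 ^ n * n.factorial := by
  have hrw : ∀ m : ℕ, (∫ t : ℝ, Real.exp (-t ^ 2) * (physHermite m t) ^ 2)
      = ∫ t : ℝ, (Qh m).eval t * Real.exp (-t ^ 2) * (Qh m).eval t := by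
    intro m; congr 1; funext t; rw [physHermite_eq]; ring
  rw [hrw]
  induction n with
  | zero =>
      have := integral_gaussian 1
      simp only [Qh, Polynomial.eval_one, one_mul, mul_one]
      simpa using this
  | succ n ih =>
      rw [hermite_int_rec, ih]
      rw [Nat.factorial_succ]
      push_cast
      ring
end

section
/- For every natural number n ≥ 1, (d^n/dx^n)(x^n/(1-e^{-x})) evaluated at x = 1 equals S_n - n!/2, where S_n = n! + Σ_{j=1}^∞ [(2j+n-1)!/(2j-1)!] · B_{2j}/(2j)!. -/
open scoped Nat
open Real

private lemma bern_odd_zero {k : ℕ} (h : Odd k) (hk : 1 < k) : bernoulli k = 0 := by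
  rw [bernoulli_eq_bernoulli'_of_ne_one (by omega), bernoulli'_eq_zero_of_odd h hk]

private lemma abs_bern_le (k : ℕ) : |(bernoulli k : ℝ)| / k.factorial ≤ 4 * (1/6)^k := by
  rcases Nat.even_or_odd k with he | ho
  · rcases Nat.eq_zero_or_pos k with rfl | hk
    · norm_num
    · obtain ⟨j, rfl⟩ := he
      have hj : j ≠ 0 := by omega
      have hZ := hasSum_zeta_nat (k := j) hj
      rw [show j + j = 2 * j by ring] at *
      set Z : ℝ := (-1:ℝ)^(j+1) * 2^(2*j-1) * π^(2*j) * bernoulli (2*j) / (2*j)! with hZdef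
      have hnonneg : (0:ℝ) ≤ Z := hZ.nonneg (fun n => by positivity)
      have hle2 : Z ≤ 2 := by
        have h1 : Z ≤ π^2/6 := by
          refine hasSum_le (fun n => ?_) hZ hasSum_zeta_two
          rcases Nat.eq_zero_or_pos n with rfl | hn
          · simp [pow_eq_zero_iff, hj]
          · apply one_div_le_one_div_of_le (by positivity)
            exact pow_le_pow_right₀ (by exact_mod_cast hn) (by omega)
        have : π ≤ 3.15 := by linarith [Real.pi_lt_d2]
        nlinarith [Real.pi_gt_three]
      have ha : (0:ℝ) < 2^(2*j-1) * π^(2*j) := by positivity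
      have hZabs : Z = (2:ℝ)^(2*j-1) * π^(2*j) * (|(bernoulli (2*j):ℝ)| / (2*j)!) := by
        conv_lhs => rw [← abs_of_nonneg hnonneg, hZdef]
        rw [abs_div, abs_mul, abs_mul, abs_mul, abs_pow, abs_neg, abs_one, one_pow, one_mul,
          abs_of_nonneg (by positivity : (0:ℝ) ≤ (2:ℝ)^(2*j-1)),
          abs_of_nonneg (by positivity : (0:ℝ) ≤ π^(2*j)), Nat.abs_cast, mul_div_assoc]
      have h2pow : (2:ℝ)^(2*j) = 2 * 2^(2*j-1) := by
        rw [← pow_succ']; congr 1; omega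
      have h6 : (6:ℝ)^(2*j) ≤ 2^(2*j)*π^(2*j) := by
        rw [← mul_pow]
        exact pow_le_pow_left₀ (by norm_num) (by nlinarith [Real.pi_gt_three]) _
      have hX : |(bernoulli (2*j):ℝ)| / (2*j)! ≤ 2 / (2^(2*j-1)*π^(2*j)) := by
        rw [le_div_iff₀ ha]
        nlinarith [hZabs ▸ hle2]
      calc |(bernoulli (2*j):ℝ)| / (2*j)! ≤ 2 / (2^(2*j-1)*π^(2*j)) := hX
        _ = 4 / (2^(2*j)*π^(2*j)) := by rw [h2pow]; ring
        _ ≤ 4 / 6^(2*j) := by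
            apply div_le_div_of_nonneg_left (by norm_num) (by positivity) h6
        _ = 4 * (1/6)^(2*j) := by rw [div_pow, one_pow]; ring
  · rcases Nat.eq_or_lt_of_le (Nat.one_le_iff_ne_zero.mpr ho.pos.ne') with h1 | h1
    · rw [← h1, bernoulli_one]
      norm_num [abs_div]
    · rw [bern_odd_zero ho h1]
      simp

private noncomputable def bc (k : ℕ) : ℝ := (-1)^k * ((bernoulli k : ℝ) / k.factorial)

private lemma abs_bc_le (k : ℕ) : |bc k| ≤ 4 * (1/6)^k := by
  rw [bc, abs_mul, abs_pow, abs_neg, abs_one, one_pow, one_mul, abs_div, Nat.abs_cast]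
  exact abs_bern_le k

private noncomputable def Fn (n m k : ℕ) : ℝ → ℝ :=
  fun y => bc k * ((k + n - 1).descFactorial m) * y ^ (k + n - 1 - m)

private noncomputable def un (n m k : ℕ) : ℝ :=
  4 * (1/6)^k * ((k + n - 1).descFactorial m) * 3 ^ (k + n - 1)

private lemma norm_Fn_le {n m k : ℕ} {y : ℝ} (hy : |y| ≤ 3) : ‖Fn n m k y‖ ≤ un n m k := by
  rw [Fn, un, Real.norm_eq_abs, abs_mul, abs_mul, Nat.abs_cast, abs_pow]
  have e2 : |y| ^ (k+n-1-m) ≤ 3 ^ (k+n-1) :=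
    le_trans (pow_le_pow_left₀ (abs_nonneg y) hy _)
      (pow_le_pow_right₀ (by norm_num) (Nat.sub_le _ _))
  exact mul_le_mul (mul_le_mul_of_nonneg_right (abs_bc_le k) (by positivity)) e2
    (by positivity) (by positivity)

private lemma summable_un (n m : ℕ) : Summable (un n m) := by
  have S0 : Summable (fun j : ℕ => (j:ℝ)^m * (1/2)^j) :=
    summable_pow_mul_geometric_of_norm_lt_one m
      (by rw [norm_eq_abs, abs_of_nonneg] <;> norm_num)
  have S1 : Summable (fun k : ℕ => ((k+n : ℕ):ℝ)^m * (1/2)^(k+n)) :=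
    S0.comp_injective (add_left_injective n)
  have S2 : Summable (fun k : ℕ => (4 * 3^n * 2^n) * (((k+n : ℕ):ℝ)^m * (1/2)^(k+n))) :=
    S1.mul_left _
  refine S2.of_nonneg_of_le (fun k => by rw [un]; positivity) (fun k => ?_)
  rw [un]
  have h1 : ((k + n - 1).descFactorial m : ℝ) ≤ ((k+n:ℕ):ℝ)^m := by
    exact_mod_cast Nat.le_trans (Nat.descFactorial_le_pow _ _)
      (Nat.pow_le_pow_left (Nat.sub_le _ _) m)
  have h2 : (3:ℝ) ^ (k + n - 1) ≤ 3 ^ (k + n) :=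
    pow_le_pow_right₀ (by norm_num) (Nat.sub_le _ _)
  calc 4 * (1/6)^k * ((k + n - 1).descFactorial m : ℝ) * 3 ^ (k + n - 1)
      ≤ 4 * (1/6)^k * ((k+n:ℕ):ℝ)^m * 3 ^ (k + n) := by gcongr <;> positivity
    _ = (4 * 3^n * 2^n) * (((k+n : ℕ):ℝ)^m * (1/2)^(k+n)) := by
        have hk6 : (1/6:ℝ)^k * 3^k = (1/2)^k := by rw [← mul_pow]; norm_num
        have hn2 : (1/2:ℝ)^n * 2^n = 1 := by rw [← mul_pow]; norm_num
        rw [pow_add (3:ℝ), pow_add ((1:ℝ)/2)]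
        linear_combination (4*((k+n:ℕ):ℝ)^m*(3:ℝ)^n) * hk6
          - (4*((k+n:ℕ):ℝ)^m*(3:ℝ)^n*(1/2:ℝ)^k) * hn2

private lemma summable_Fn (n m : ℕ) {y : ℝ} (hy : |y| ≤ 3) : Summable (fun k => Fn n m k y) :=
  Summable.of_norm_bounded (summable_un n m) (fun k => norm_Fn_le hy)

private lemma hasDerivAt_Fn (n m k : ℕ) (y : ℝ) : HasDerivAt (Fn n m k) (Fn n (m+1) k y) y := by
  have h := (hasDerivAt_pow (k + n - 1 - m) y).const_mul (bc k * ((k + n - 1).descFactorial m))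
  refine h.congr_deriv ?_
  rw [Fn, Nat.descFactorial_succ, show k+n-1-m-1 = k+n-1-(m+1) from by omega]
  push_cast
  ring

private lemma iter_deriv_tsum (n m : ℕ) :
    ∀ y ∈ Set.Ioo (-3:ℝ) 3, iteratedDeriv m (fun z => ∑' k, Fn n 0 k z) y = ∑' k, Fn n m k y := by
  induction m with
  | zero => intro y hy; simp [iteratedDeriv_zero]
  | succ m ih =>
    intro y hy
    rw [iteratedDeriv_succ]
    have hloc : iteratedDeriv m (fun z => ∑' k, Fn n 0 k z) =ᶠ[nhds y]
        (fun z => ∑' k, Fn n m k z) := by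
      filter_upwards [isOpen_Ioo.mem_nhds hy] with z hz using ih z hz
    rw [hloc.deriv_eq]
    have habs : ∀ z : ℝ, z ∈ Set.Ioo (-3:ℝ) 3 → |z| ≤ 3 := by
      intro z hz; rw [abs_le]; exact ⟨hz.1.le, hz.2.le⟩
    have H : HasDerivAt (fun z => ∑' k, Fn n m k z) (∑' k, Fn n (m+1) k y) y :=
      hasDerivAt_tsum_of_isPreconnected (summable_un n (m+1)) isOpen_Ioo isPreconnected_Ioo
        (fun k z _ => hasDerivAt_Fn n m k z)
        (fun k z hz => norm_Fn_le (habs z hz))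
        (y₀ := 0) (by norm_num) (summable_Fn n m (by norm_num)) hy
    exact H.deriv

private lemma bern_antidiag (k : ℕ) :
    ∑ p ∈ Finset.HasAntidiagonal.antidiagonal k,
      ((bernoulli p.1 : ℚ)/p.1.factorial) * (if p.2 = 0 then 0 else 1/(p.2.factorial:ℚ)) =
      if k = 1 then 1 else 0 := by
  have h2 := congrArg (PowerSeries.coeff k) (bernoulliPowerSeries_mul_exp_sub_one ℚ)
  rw [PowerSeries.coeff_mul, PowerSeries.coeff_X] at h2
  rw [← h2]
  refine Finset.sum_congr rfl (fun p _ => ?_)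
  rw [map_sub, PowerSeries.coeff_exp, PowerSeries.coeff_one, bernoulliPowerSeries,
    PowerSeries.coeff_mk]
  by_cases hp : p.2 = 0
  · simp [hp, Nat.factorial]
  · simp only [hp, if_neg, ite_false, Algebra.algebraMap_self, RingHom.id_apply, sub_zero, one_div]

private lemma bern_antidiag_real (k : ℕ) :
    ∑ p ∈ Finset.HasAntidiagonal.antidiagonal k,
      ((bernoulli p.1 : ℝ)/p.1.factorial) * (if p.2 = 0 then 0 else 1/(p.2.factorial:ℝ)) =
      if k = 1 then 1 else 0 := by
  have h := bern_antidiag k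
  apply_fun (fun q : ℚ => (q : ℝ)) at h
  push_cast at h
  convert h using 2 with p hp
  · rw [apply_ite (fun q : ℚ => (q : ℝ))]
    push_cast
    ring_nf
  · rw [apply_ite (fun q : ℚ => (q : ℝ))]
    push_cast
    ring_nf

private lemma G_mul (y : ℝ) (hy : |y| ≤ 3) :
    (∑' k : ℕ, (bernoulli k : ℝ)/k.factorial * y^k) * (Real.exp y - 1) = y := by
  set a : ℕ → ℝ := fun k => (bernoulli k : ℝ)/k.factorial * y^k with ha
  set b : ℕ → ℝ := fun j => if j = 0 then 0 else y^j/(j.factorial:ℝ) with hb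
  have hsa : Summable (fun k => ‖a k‖) := by
    have : Summable (fun k : ℕ => 4 * (1/2:ℝ)^k) :=
      (summable_geometric_of_lt_one (by norm_num) (by norm_num)).mul_left 4
    refine this.of_nonneg_of_le (fun k => norm_nonneg _) (fun k => ?_)
    rw [ha, norm_mul, norm_div, Real.norm_eq_abs, Real.norm_eq_abs, Nat.abs_cast,
      Real.norm_eq_abs, abs_pow]
    calc |(bernoulli k : ℝ)|/k.factorial * |y|^k ≤ (4 * (1/6)^k) * 3^k := by
          apply mul_le_mul (abs_bern_le k) (pow_le_pow_left₀ (abs_nonneg y) hy k)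
            (by positivity) (by positivity)
      _ = 4 * (1/2)^k := by
          rw [mul_assoc, ← mul_pow]; norm_num
  have hsb : Summable (fun j => ‖b j‖) := by
    refine (Real.summable_pow_div_factorial |y|).of_nonneg_of_le
      (fun j => norm_nonneg _) (fun j => ?_)
    rw [hb]
    by_cases hj : j = 0
    · simp [hj]
    · simp only [hj, if_neg, ite_false, Real.norm_eq_abs, abs_div, abs_pow, Nat.abs_cast]
      exact le_refl _
  have hexp : Real.exp y - 1 = ∑' j, b j := by
    have he : Real.exp y = ∑' j : ℕ, y^j/(j.factorial:ℝ) := by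
      rw [Real.exp_eq_exp_ℝ, NormedSpace.exp_eq_tsum_div]
    have hs1 : Summable (fun j : ℕ => y^j/(j.factorial:ℝ)) := by
      refine Summable.of_norm ?_
      simpa [abs_div, abs_pow] using Real.summable_pow_div_factorial |y|
    have hs2 : Summable (fun j : ℕ => if j = 0 then (1:ℝ) else 0) :=
      (hasSum_ite_eq 0 (1:ℝ)).summable
    have : ∑' j, b j = ∑' j, (y^j/(j.factorial:ℝ) - if j = 0 then 1 else 0) := by
      refine tsum_congr (fun j => ?_)
      by_cases hj : j = 0 <;> simp [hb, hj]
    rw [this, hs1.tsum_sub hs2, tsum_ite_eq, ← he]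
  rw [hexp, tsum_mul_tsum_eq_tsum_sum_antidiagonal_of_summable_norm hsa hsb]
  have hinner : ∀ k : ℕ, ∑ p ∈ Finset.HasAntidiagonal.antidiagonal k, a p.1 * b p.2 =
      (if k = 1 then 1 else 0) * y^k := by
    intro k
    rw [← bern_antidiag_real k, Finset.sum_mul]
    refine Finset.sum_congr rfl (fun p hp => ?_)
    have hpk : p.1 + p.2 = k := Finset.HasAntidiagonal.mem_antidiagonal.mp hp
    by_cases hj : p.2 = 0
    · simp [ha, hb, hj]
    · simp only [ha, hb, hj, if_neg, ite_false]
      rw [← hpk, pow_add]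
      field_simp
  rw [tsum_congr hinner, tsum_eq_single 1 (fun k hk => by simp [hk])]
  simp

private lemma f_eq_H (n : ℕ) (hn : 1 ≤ n) {y : ℝ} (hy : y ∈ Set.Ioo (0:ℝ) 2) :
    y ^ n / (1 - Real.exp (-y)) = ∑' k, Fn n 0 k y := by
  obtain ⟨hy0, hy2⟩ := hy
  have habs : |(-y)| ≤ 3 := by rw [abs_neg, abs_of_pos hy0]; linarith
  have hG := G_mul (-y) habs
  have hne : Real.exp (-y) - 1 ≠ 0 := by
    have : Real.exp (-y) < 1 := by
      rw [show (1:ℝ) = Real.exp 0 by simp]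
      exact Real.exp_lt_exp.mpr (by linarith)
    linarith
  have hGval : (∑' k : ℕ, (bernoulli k : ℝ)/k.factorial * (-y)^k) = y / (1 - Real.exp (-y)) := by
    rw [eq_div_iff (by intro h; apply hne; linarith [h])]
    calc (∑' k : ℕ, (bernoulli k : ℝ)/k.factorial * (-y)^k) * (1 - Real.exp (-y))
        = -((∑' k : ℕ, (bernoulli k : ℝ)/k.factorial * (-y)^k) * (Real.exp (-y) - 1)) := by ring
      _ = -(-y) := by rw [hG]
      _ = y := by ring
  have hterm : ∀ k : ℕ, Fn n 0 k y = ((bernoulli k : ℝ)/k.factorial * (-y)^k) * y^(n-1) := by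
    intro k
    rw [Fn, Nat.descFactorial_zero, bc]
    rw [show k + n - 1 - 0 = k + (n-1) from by omega, pow_add]
    rw [show (-y)^k = (-1)^k * y^k from by rw [neg_pow]]
    push_cast
    ring
  rw [tsum_congr hterm, tsum_mul_right, hGval]
  rw [div_mul_eq_mul_div, show y * y^(n-1) = y^n from by
    rw [← pow_succ']; congr 1; omega]

theorem deriv_at_one (n : ℕ) (hn : 1 ≤ n) :
    iteratedDeriv n (fun y : ℝ => y ^ n / (1 - Real.exp (-y))) 1 =
      ((n.factorial : ℝ) +
          ∑' j : ℕ,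
            (((2 * (j + 1) + n - 1).factorial : ℝ) / ((2 * (j + 1) - 1).factorial : ℝ)) *
              ((bernoulli (2 * (j + 1)) : ℝ) / ((2 * (j + 1)).factorial : ℝ))) -
        (n.factorial : ℝ) / 2 := by
  have h1 : iteratedDeriv n (fun y : ℝ => y ^ n / (1 - Real.exp (-y))) 1
      = iteratedDeriv n (fun z => ∑' k, Fn n 0 k z) 1 := by
    apply Filter.EventuallyEq.iteratedDeriv_eq
    filter_upwards [isOpen_Ioo.mem_nhds (show (1:ℝ) ∈ Set.Ioo 0 2 by constructor <;> norm_num)]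
      with z hz using f_eq_H n hn hz
  rw [h1, iter_deriv_tsum n n 1 (by constructor <;> norm_num)]
  -- values of the terms
  have hT0 : Fn n n 0 1 = 0 := by
    rw [Fn, Nat.descFactorial_eq_zero_iff_lt.mpr (by omega : 0 + n - 1 < n)]
    simp
  have hT1 : Fn n n 1 1 = (n.factorial : ℝ) / 2 := by
    rw [Fn, show 1 + n - 1 = n from by omega, Nat.descFactorial_self, bc, bernoulli_one]
    push_cast
    norm_num [Nat.factorial]
    ring
  have hTodd : ∀ j : ℕ, Fn n n (2*j+3) 1 = 0 := by
    intro j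
    rw [Fn, bc, bern_odd_zero (⟨j+1, by omega⟩ : Odd (2*j+3)) (by omega)]
    simp
  have hTeven : ∀ j : ℕ, Fn n n (2*j+2) 1 =
      (((2 * (j + 1) + n - 1).factorial : ℝ) / ((2 * (j + 1) - 1).factorial : ℝ)) *
        ((bernoulli (2 * (j + 1)) : ℝ) / ((2 * (j + 1)).factorial : ℝ)) := by
    intro j
    rw [show 2*(j+1) = 2*j+2 from by ring, show 2*j+2-1 = 2*j+1 from by omega]
    have hle : n ≤ 2*j+2+n-1 := by omega
    have hdf := Nat.factorial_mul_descFactorial hle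
    rw [show 2*j+2+n-1-n = 2*j+1 from by omega] at hdf
    have hdfR : ((2*j+2+n-1).descFactorial n : ℝ)
        = ((2*j+2+n-1).factorial : ℝ)/((2*j+1).factorial : ℝ) := by
      rw [eq_div_iff (by exact_mod_cast (2*j+1).factorial_ne_zero)]
      exact_mod_cast (mul_comm ((2*j+1).factorial) _ ▸ hdf)
    rw [Fn, hdfR, bc, Even.neg_one_pow ⟨j+1, by ring⟩]
    simp only [one_pow, one_mul]
    ring
  -- summability facts
  have hsT : Summable (fun k => Fn n n k 1) := summable_Fn n n (by norm_num)
  have hsT1 : Summable (fun k => Fn n n (k+1) 1) := by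
    have := hsT.comp_injective (add_left_injective 1)
    simpa [Function.comp_def] using this
  have hsT2 : Summable (fun k => Fn n n (k+2) 1) := by
    have := hsT.comp_injective (add_left_injective 2)
    simpa [Function.comp_def] using this
  have hsE : Summable (fun j => Fn n n (2*j+2) 1) := by
    have := hsT.comp_injective (show Function.Injective (fun j : ℕ => 2*j+2) from
      fun a b h => by simp only [] at h; omega)
    simpa [Function.comp_def] using this
  have hsO : Summable (fun j => Fn n n (2*j+3) 1) := by
    have := hsT.comp_injective (show Function.Injective (fun j : ℕ => 2*j+3) from
      fun a b h => by simp only [] at h; omega)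
    simpa [Function.comp_def] using this
  -- decompose the sum
  rw [hsT.tsum_eq_zero_add, hsT1.tsum_eq_zero_add]
  have hsplit : ∑' k, Fn n n (k+1+1) 1
      = (∑' j, Fn n n (2*j+2) 1) + ∑' j, Fn n n (2*j+3) 1 := by
    have h := tsum_even_add_odd (f := fun k => Fn n n (k+2) 1)
      (by simpa using hsE)
      (by simpa [show ∀ j:ℕ, 2*j+1+2 = 2*j+3 from fun j => by omega] using hsO)
    calc (∑' k, Fn n n (k+1+1) 1) = ∑' k, Fn n n (k+2) 1 := rfl
      _ = (∑' j, Fn n n (2*j+2) 1) + ∑' j, Fn n n (2*j+1+2) 1 := h.symm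
      _ = (∑' j, Fn n n (2*j+2) 1) + ∑' j, Fn n n (2*j+3) 1 := by
          congr 1
  rw [hsplit, hT0, hT1, tsum_congr hTodd, tsum_zero, tsum_congr hTeven]
  ring
end
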